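/- Let $k, n \in \mathbb{N}$, $p \in (0,1]$, and let $\mathcal{A} \subseteq [k]^n$. Embed $\mathcal{A}$ into $(\{0,1\}^k)^n$ as $\tilde{\mathcal{A}} = \{S : \exists z \in \mathcal{A},\ \forall i,\ S_i = \{z_i\}\}$ and let $\mathcal{B} = \tilde{\mathcal{A}}^\uparrow$ be its up-closure. Then $\frac{|\mathcal{A}|}{k^n} \leq \frac{\mu_p(\mathcal{B})}{(1 - (1-p)^k)^n}$. -/

import Mathlib

open Finset

/-- The `p`-biased product measure on `({0,1}^k)^n`. -/
noncomputable def mupB (p : ℝ) {k n : ℕ} (x : Fin n → Fin k → Bool) : ℝ :=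
  ∏ i, ∏ j, if x i j then p else 1 - p

/-- The embedding `Ã` of `𝒜 ⊆ [k]^n` into `({0,1}^k)^n` by tuples of singletons. -/
def tildeEmb {k n : ℕ} (A : Finset (Fin n → Fin k)) : Set (Fin n → Fin k → Bool) :=
  {S | ∃ z ∈ A, ∀ i j, S i j = decide (j = z i)}

/-- The up-closure of a family in `({0,1}^k)^n` (coordinatewise). -/
def upClosure {k n : ℕ} (T : Set (Fin n → Fin k → Bool)) : Set (Fin n → Fin k → Bool) :=
  {x | ∃ y ∈ T, ∀ i j, y i j = true → x i j = true}

open Classical in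
/-- The `μ_p`-measure of a family in `({0,1}^k)^n`. -/
noncomputable def muSet (p : ℝ) {k n : ℕ} (B : Set (Fin n → Fin k → Bool)) : ℝ :=
  ∑ x, if x ∈ B then mupB p x else 0

/-! ### Auxiliary definitions and lemmas -/

/-- One-block measure. -/
noncomputable def mu1 (p : ℝ) {k : ℕ} (s : Fin k → Bool) : ℝ :=
  ∏ j, if s j then p else 1 - p

/-- Number of true coordinates of a block. -/
def cnt {k : ℕ} (s : Fin k → Bool) : ℕ := (univ.filter fun j => s j = true).card

lemma mupB_eq (p : ℝ) {k n : ℕ} (x : Fin n → Fin k → Bool) :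
    mupB p x = ∏ i, mu1 p (x i) := rfl

lemma mu1_nonneg {p : ℝ} (hp0 : 0 ≤ p) (hp1 : p ≤ 1) {k : ℕ} (s : Fin k → Bool) :
    0 ≤ mu1 p s := by
  apply Finset.prod_nonneg
  intro j _
  by_cases h : s j = true <;> simp [h] <;> linarith

lemma mupB_nonneg {p : ℝ} (hp0 : 0 ≤ p) (hp1 : p ≤ 1) {k n : ℕ} (x : Fin n → Fin k → Bool) :
    0 ≤ mupB p x := by
  rw [mupB_eq]
  exact Finset.prod_nonneg fun i _ => mu1_nonneg hp0 hp1 _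

lemma cnt_eq_sum {k : ℕ} (s : Fin k → Bool) :
    cnt s = ∑ j, if s j = true then 1 else 0 := by
  rw [cnt, Finset.card_filter]

lemma cnt_eq_zero {k : ℕ} (s : Fin k → Bool) :
    cnt s = 0 ↔ s = fun _ => false := by
  rw [cnt, Finset.card_eq_zero, Finset.filter_eq_empty_iff, funext_iff]
  constructor
  · intro h j
    have := h (mem_univ j)
    simpa using this
  · intro h j _
    simp [h j]

lemma sum_mu1 (p : ℝ) (k : ℕ) : ∑ s : Fin k → Bool, mu1 p s = 1 := by
  simp only [mu1]
  rw [← Fintype.piFinset_univ,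
    ← Finset.prod_univ_sum (fun _ : Fin k => (univ : Finset Bool))
      (fun _ b => if b = true then p else 1 - p)]
  simp

lemma mu1_const_false (p : ℝ) (k : ℕ) : mu1 p (fun _ : Fin k => false) = (1 - p) ^ k := by
  simp [mu1]

lemma sum_mu1_nonempty (p : ℝ) (k : ℕ) :
    ∑ s : Fin k → Bool, (if cnt s = 0 then (0:ℝ) else mu1 p s) = 1 - (1 - p) ^ k := by
  classical
  have h : ∀ s : Fin k → Bool, (if cnt s = 0 then (0:ℝ) else mu1 p s)
      = mu1 p s - (if s = (fun _ => false) then mu1 p s else 0) := by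
    intro s
    by_cases hs : s = fun _ => false
    · rw [if_pos ((cnt_eq_zero s).2 hs), if_pos hs]; ring
    · rw [if_neg (fun h => hs ((cnt_eq_zero s).1 h)), if_neg hs]; ring
  rw [Finset.sum_congr rfl fun s _ => h s, Finset.sum_sub_distrib, sum_mu1,
    Finset.sum_ite_eq' univ (fun _ : Fin k => false) (mu1 p), if_pos (mem_univ _),
    mu1_const_false]

lemma H_symm (p : ℝ) {k : ℕ} (a b : Fin k) :
    ∑ s : Fin k → Bool, (if s a = true then mu1 p s / cnt s else 0)
      = ∑ s : Fin k → Bool, (if s b = true then mu1 p s / cnt s else 0) := by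
  classical
  refine Fintype.sum_equiv ((Equiv.swap a b).arrowCongr (Equiv.refl Bool)) _ _ ?_
  intro s
  have h1 : (((Equiv.swap a b).arrowCongr (Equiv.refl Bool)) s) b = s a := by
    simp [Equiv.arrowCongr, Equiv.swap_apply_right]
  have h2 : mu1 p (((Equiv.swap a b).arrowCongr (Equiv.refl Bool)) s) = mu1 p s := by
    simp only [mu1, Equiv.arrowCongr_apply, Equiv.refl_apply, Function.comp]
    exact Equiv.prod_comp (Equiv.swap a b).symm (fun j => if s j = true then p else 1 - p)
  have h3 : cnt (((Equiv.swap a b).arrowCongr (Equiv.refl Bool)) s) = cnt s := by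
    rw [cnt_eq_sum, cnt_eq_sum]
    simp only [Equiv.arrowCongr_apply, Equiv.refl_apply, Function.comp]
    exact Equiv.sum_comp (Equiv.swap a b).symm (fun j => if s j = true then (1:ℕ) else 0)
  rw [h1, h2, h3]

lemma H_val (p : ℝ) {k : ℕ} (hk : 0 < k) (a : Fin k) :
    ∑ s : Fin k → Bool, (if s a = true then mu1 p s / cnt s else 0)
      = (1 - (1 - p) ^ k) / k := by
  classical
  have key : (k : ℝ) * (∑ s : Fin k → Bool, (if s a = true then mu1 p s / cnt s else 0))
      = 1 - (1 - p) ^ k := by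
    have h1 : (k : ℝ) * (∑ s : Fin k → Bool, (if s a = true then mu1 p s / cnt s else 0))
        = ∑ b : Fin k, ∑ s : Fin k → Bool, (if s b = true then mu1 p s / cnt s else 0) := by
      rw [Finset.sum_congr rfl fun b _ => H_symm p b a, Finset.sum_const]
      simp [nsmul_eq_mul]
    rw [h1, Finset.sum_comm]
    rw [← sum_mu1_nonempty p k]
    refine Finset.sum_congr rfl fun s _ => ?_
    have : ∑ b : Fin k, (if s b = true then mu1 p s / cnt s else 0)
        = (cnt s : ℝ) * (mu1 p s / cnt s) := by
      rw [Finset.sum_ite, Finset.sum_const, Finset.sum_const_zero, add_zero, nsmul_eq_mul, cnt]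
    rw [this]
    by_cases hc : cnt s = 0
    · simp [hc]
    · rw [if_neg hc, mul_div_cancel₀]
      exact_mod_cast hc
  have hk' : (k : ℝ) ≠ 0 := by positivity
  field_simp at key ⊢
  linarith [key]

lemma card_pi {k n : ℕ} (x : Fin n → Fin k → Bool) :
    (univ.filter fun z : Fin n → Fin k => ∀ i, x i (z i) = true).card = ∏ i, cnt (x i) := by
  classical
  have he : (univ.filter fun z : Fin n → Fin k => ∀ i, x i (z i) = true)
      = Fintype.piFinset (fun i => univ.filter fun j => x i j = true) := by
    ext z; simp [Fintype.mem_piFinset]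
  rw [he, Fintype.card_piFinset]
  rfl

/-- Coupling lemma: `|𝒜|/k^n ≤ μ_p(ℬ) / (1 - (1-p)^k)^n` where `ℬ` is the up-closure of
the singleton embedding of `𝒜`. -/
theorem embedding_measure_bound (k n : ℕ) (p : ℝ) (hp0 : 0 < p) (hp1 : p ≤ 1)
    (A : Finset (Fin n → Fin k)) :
    (A.card : ℝ) / k ^ n ≤
      muSet p (upClosure (tildeEmb A)) / (1 - (1 - p) ^ k) ^ n := by
  classical
  have hmuSetnn : 0 ≤ muSet p (upClosure (tildeEmb A)) := by
    apply Finset.sum_nonneg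
    intro x _
    split
    · exact mupB_nonneg hp0.le hp1 x
    · exact le_refl 0
  rcases Nat.eq_zero_or_pos k with hk | hk
  · subst hk
    rcases Nat.eq_zero_or_pos n with hn | hn
    · subst hn
      simp only [pow_zero, div_one]
      rcases A.eq_empty_or_nonempty with hA | ⟨z, hz⟩
      · rw [hA] at hmuSetnn
        simp only [hA, Finset.card_empty, Nat.cast_zero, zero_div]
        positivity
      · have hcard : A.card ≤ 1 := by
          have : A.card ≤ Fintype.card (Fin 0 → Fin 0) := Finset.card_le_univ A
          simpa using this
        have hmu : muSet p (upClosure (tildeEmb A)) = 1 := by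
          rw [muSet]
          rw [Fintype.sum_eq_single (fun _ : Fin 0 => fun _ : Fin 0 => true)]
          · rw [if_pos]
            · simp [mupB]
            · exact ⟨fun _ _ => true, ⟨z, hz, fun i => absurd i.2 (Nat.not_lt_zero _)⟩,
                fun i => absurd i.2 (Nat.not_lt_zero _)⟩
          · intro y hy
            exact absurd (funext fun i => absurd i.2 (Nat.not_lt_zero _)) hy
        rw [hmu]
        exact_mod_cast hcard
    · -- k = 0 and n > 0 : A is empty and the RHS denominator is 0
      have hA : A = ∅ := by
        ext z
        exact iff_of_false (fun _ => absurd (z ⟨0, hn⟩).2 (Nat.not_lt_zero _)) (by simp)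
      have : (1 : ℝ) - (1 - p) ^ (0:ℕ) = 0 := by norm_num
      rw [hA, this, zero_pow hn.ne', div_zero]
      simp
  -- main case : k ≥ 1
  have hkR : (0:ℝ) < k := by exact_mod_cast hk
  set q : ℝ := 1 - (1 - p) ^ k with hqdef
  have hq0 : 0 < q := by
    have h1 : (1 - p) ^ k < 1 := pow_lt_one₀ (by linarith) (by linarith) hk.ne'
    simp only [hqdef]; linarith
  have key : (A.card : ℝ) * (q / k) ^ n ≤ muSet p (upClosure (tildeEmb A)) := by
    have hg : ∀ z : Fin n → Fin k,
        (∑ x : Fin n → Fin k → Bool,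
            ∏ i, (if x i (z i) = true then mu1 p (x i) / cnt (x i) else 0))
          = (q / k) ^ n := by
      intro z
      rw [← Fintype.piFinset_univ,
        ← Finset.prod_univ_sum (fun _ : Fin n => (univ : Finset (Fin k → Bool)))
          (fun i s => if s (z i) = true then mu1 p s / (cnt s : ℝ) else 0)]
      rw [Finset.prod_congr rfl fun i _ => H_val p hk (z i)]
      simp [hqdef, div_pow]
    have step : ∀ x : Fin n → Fin k → Bool,
        (∑ z ∈ A, ∏ i, (if x i (z i) = true then mu1 p (x i) / cnt (x i) else 0))
          ≤ (if x ∈ upClosure (tildeEmb A) then mupB p x else 0) := by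
      intro x
      set P : ℝ := ∏ i, mu1 p (x i) / cnt (x i) with hP
      have hPnn : 0 ≤ P := by
        apply Finset.prod_nonneg
        intro i _
        exact div_nonneg (mu1_nonneg hp0.le hp1 _) (Nat.cast_nonneg _)
      have hterm : ∀ z : Fin n → Fin k,
          (∏ i, (if x i (z i) = true then mu1 p (x i) / (cnt (x i):ℝ) else 0))
            = if (∀ i, x i (z i) = true) then P else 0 := by
        intro z
        by_cases h : ∀ i, x i (z i) = true
        · rw [if_pos h]; exact Finset.prod_congr rfl fun i _ => if_pos (h i)
        · rw [if_neg h]; push_neg at h; obtain ⟨i, hi⟩ := h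
          exact Finset.prod_eq_zero (mem_univ i) (if_neg hi)
      rw [Finset.sum_congr rfl fun z _ => hterm z, Finset.sum_ite, Finset.sum_const,
        Finset.sum_const_zero, add_zero, nsmul_eq_mul]
      set N := (A.filter fun z => ∀ i, x i (z i) = true).card with hN
      rcases Nat.eq_zero_or_pos N with hN0 | hN0
      · rw [hN0]
        simp only [Nat.cast_zero, zero_mul]
        split
        · exact mupB_nonneg hp0.le hp1 x
        · exact le_refl 0
      · obtain ⟨z, hz⟩ := Finset.card_pos.1 hN0
        rw [Finset.mem_filter] at hz
        obtain ⟨hzA, hzx⟩ := hz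
        have hxB : x ∈ upClosure (tildeEmb A) := by
          refine ⟨fun i j => decide (j = z i), ⟨z, hzA, fun i j => rfl⟩, fun i j hj => ?_⟩
          have : j = z i := by simpa using hj
          rw [this]; exact hzx i
        rw [if_pos hxB]
        have hcpos : ∀ i, 0 < cnt (x i) := by
          intro i
          apply Finset.card_pos.2
          exact ⟨z i, by simp [hzx i]⟩
        have hNM : N ≤ ∏ i, cnt (x i) := by
          rw [← card_pi x]
          exact Finset.card_le_card (Finset.filter_subset_filter _ (Finset.subset_univ A))
        have hMP : ((∏ i, cnt (x i) : ℕ) : ℝ) * P = mupB p x := by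
          rw [hP, Nat.cast_prod, ← Finset.prod_mul_distrib, mupB_eq]
          refine Finset.prod_congr rfl fun i _ => ?_
          rw [mul_div_cancel₀]
          exact_mod_cast (hcpos i).ne'
        calc (N : ℝ) * P ≤ ((∏ i, cnt (x i) : ℕ) : ℝ) * P := by
              apply mul_le_mul_of_nonneg_right _ hPnn
              exact_mod_cast hNM
          _ = mupB p x := hMP
    calc (A.card : ℝ) * (q / k) ^ n = ∑ z ∈ A, (q / k) ^ n := by
          rw [Finset.sum_const, nsmul_eq_mul]
      _ = ∑ z ∈ A, ∑ x : Fin n → Fin k → Bool,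
            ∏ i, (if x i (z i) = true then mu1 p (x i) / cnt (x i) else 0) := by
          exact (Finset.sum_congr rfl fun z _ => (hg z).symm)
      _ = ∑ x : Fin n → Fin k → Bool, ∑ z ∈ A,
            ∏ i, (if x i (z i) = true then mu1 p (x i) / cnt (x i) else 0) :=
          Finset.sum_comm
      _ ≤ ∑ x : Fin n → Fin k → Bool,
            (if x ∈ upClosure (tildeEmb A) then mupB p x else 0) :=
          Finset.sum_le_sum fun x _ => step x
      _ = muSet p (upClosure (tildeEmb A)) := by rw [muSet]
  -- conclude
  have hqk : (q / k) ^ n = q ^ n / k ^ n := div_pow q _ n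
  rw [div_le_div_iff₀ (by positivity) (by positivity)]
  have h2 := mul_le_mul_of_nonneg_right key (le_of_lt (pow_pos hkR n))
  calc (A.card : ℝ) * q ^ n = (A.card : ℝ) * (q / k) ^ n * k ^ n := by
        rw [hqk]; field_simp
    _ ≤ muSet p (upClosure (tildeEmb A)) * k ^ n := h2
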